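/- Let ·: H⊗A → A be a symmetrical partial action on an associative algebra A, and let φ: A → Hom(H,A) be given by φ(a)(h) = h·a, where Hom(H,A) is the convolution algebra with left H-action (k▷f)(h) = f(hk). Then B = H▷φ(A) is an H-module subalgebra of Hom(H,A), φ(A) is an ideal of B, and (B,φ) is a minimal globalization of the partial action. -/

import Mathlib

open TensorProduct

section PartialHopfPrelude

variable (k : Type) [Field k] (H : Type) [Ring H] [HopfAlgebra k H]

/-- Sweedler-style sum `Σ f h₁ h₂` over the comultiplication of `h`. -/
noncomputable def sweedler {M : Type} [AddCommGroup M] [Module k M]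
    (f : H →ₗ[k] H →ₗ[k] M) (h : H) : M :=
  TensorProduct.lift f (Coalgebra.comul h)

variable {A : Type} [AddCommGroup A] [Module k A]

/-- `Σ (h₁ · a) * (h₂ g · b)`, with an explicit multiplication `mA` on `A`. -/
noncomputable def paRhs (mA : A →ₗ[k] A →ₗ[k] A) (act : H →ₗ[k] A →ₗ[k] A)
    (h g : H) (a b : A) : A :=
  sweedler k H ((mA.comp (act.flip a)).compl₂ ((act.flip b).comp (LinearMap.mulRight k g))) h

/-- `Σ (h₁ g · b) * (h₂ · a)`, with an explicit multiplication `mA` on `A`. -/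
noncomputable def paSymmRhs (mA : A →ₗ[k] A →ₗ[k] A) (act : H →ₗ[k] A →ₗ[k] A)
    (h g : H) (a b : A) : A :=
  sweedler k H ((mA.comp ((act.flip b).comp (LinearMap.mulRight k g))).compl₂ (act.flip a)) h

/-- A (left) partial action of the Hopf algebra `H` on `A`, where the (possibly nonunital,
possibly nonassociative) multiplication of `A` is given explicitly as a bilinear map `mA`:
`1_H · a = a` and `h · (a (g · b)) = Σ (h₁ · a)(h₂ g · b)`. -/
structure IsPartialActionOn (mA : A →ₗ[k] A →ₗ[k] A) (act : H →ₗ[k] A →ₗ[k] A) : Prop where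
  one_act : ∀ a : A, act 1 a = a
  act_assoc : ∀ (h g : H) (a b : A), act h (mA a (act g b)) = paRhs k H mA act h g a b

/-- A symmetrical partial action: additionally `h · ((g · b) a) = Σ (h₁ g · b)(h₂ · a)`. -/
structure IsSymmPartialActionOn (mA : A →ₗ[k] A →ₗ[k] A) (act : H →ₗ[k] A →ₗ[k] A)
    extends IsPartialActionOn k H mA act : Prop where
  act_symm : ∀ (h g : H) (a b : A), act h (mA (act g b) a) = paSymmRhs k H mA act h g a b

variable {B : Type} [NonUnitalRing B] [Module k B] [SMulCommClass k B B] [IsScalarTower k B B]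

/-- A partial action of `H` on the nonunital algebra `B` (with its own multiplication). -/
def IsPartialAction (act : H →ₗ[k] B →ₗ[k] B) : Prop :=
  IsPartialActionOn k H (LinearMap.mul k B) act

/-- A symmetrical partial action of `H` on the nonunital algebra `B`. -/
def IsSymmPartialAction (act : H →ₗ[k] B →ₗ[k] B) : Prop :=
  IsSymmPartialActionOn k H (LinearMap.mul k B) act

end PartialHopfPrelude

section Stmt12

variable {k : Type} [Field k] {H : Type} [Ring H] [HopfAlgebra k H]
variable {A : Type} [NonUnitalRing A] [Module k A] [SMulCommClass k A A] [IsScalarTower k A A]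

/-- The convolution product on `Hom(H, A)`: `(f * g)(h) = Σ f(h₁) g(h₂)`. -/
noncomputable def convL : (H →ₗ[k] A) →ₗ[k] (H →ₗ[k] A) →ₗ[k] (H →ₗ[k] A) :=
  (TensorProduct.mapBilinear (RingHom.id k) H H A A).compr₂
    (((LinearMap.llcomp k H (H ⊗[k] H) A).flip (Coalgebra.comul)).comp
      (LinearMap.llcomp k (H ⊗[k] H) (A ⊗[k] A) A (LinearMap.mul' k A)))

/-- The left `H`-action on `Hom(H, A)`: `(g ▷ f)(h) = f (h g)`. -/
noncomputable def gactC : H →ₗ[k] (H →ₗ[k] A) →ₗ[k] (H →ₗ[k] A) :=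
  ((LinearMap.llcomp k H H A).flip).comp ((LinearMap.mul k H).flip)

-- test basics
section Test
open Coalgebra HopfAlgebra
variable {k : Type} [Field k] {H : Type} [Ring H] [HopfAlgebra k H]
variable {A : Type} [NonUnitalRing A] [Module k A] [SMulCommClass k A A] [IsScalarTower k A A]

@[simp] lemma gactC_apply (h : H) (f : H →ₗ[k] A) (g : H) : gactC h f g = f (g * h) := rfl
example (x y : H →ₗ[k] A) (g : H) :
    convL x y g = LinearMap.mul' k A (TensorProduct.map x y (Coalgebra.comul g)) := rfl

lemma sweedler_repr {M : Type} [AddCommGroup M] [Module k M]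
    (f : H →ₗ[k] H →ₗ[k] M) {h : H} {ι : Type*} (r : Coalgebra.Repr k h ι) :
    sweedler k H f h = ∑ i ∈ r.index, f (r.left i) (r.right i) := by
  rw [sweedler, ← r.eq, map_sum]; simp

lemma convL_repr (x y : H →ₗ[k] A) {g : H} {ι : Type*} (s : Coalgebra.Repr k g ι) :
    convL x y g = ∑ j ∈ s.index, x (s.left j) * y (s.right j) := by
  show LinearMap.mul' k A (TensorProduct.map x y (Coalgebra.comul g)) = _
  rw [← s.eq, map_sum, map_sum]; simp

noncomputable def reprMul {g h : H} {ι κ : Type*} (s : Coalgebra.Repr k g ι)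
    (r : Coalgebra.Repr k h κ) :
    Coalgebra.Repr k (g * h) (ι × κ) where
  index := s.index ×ˢ r.index
  left := fun p => s.left p.1 * r.left p.2
  right := fun p => s.right p.1 * r.right p.2
  eq := by
    rw [Finset.sum_product]
    simp only [← Algebra.TensorProduct.tmul_mul_tmul]
    rw [← Finset.sum_mul_sum, s.eq, r.eq, Bialgebra.comul_mul]

@[simp] lemma reprMul_index {g h : H} {ι κ : Type*} (s : Coalgebra.Repr k g ι) (r : Coalgebra.Repr k h κ) :
    (reprMul s r).index = s.index ×ˢ r.index := rfl
@[simp] lemma reprMul_left {g h : H} {ι κ : Type*} (s : Coalgebra.Repr k g ι) (r : Coalgebra.Repr k h κ)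
    (p : ι × κ) : (reprMul s r).left p = s.left p.1 * r.left p.2 := rfl
@[simp] lemma reprMul_right {g h : H} {ι κ : Type*} (s : Coalgebra.Repr k g ι) (r : Coalgebra.Repr k h κ)
    (p : ι × κ) : (reprMul s r).right p = s.right p.1 * r.right p.2 := rfl
end Test

section Test2
open Coalgebra HopfAlgebra
variable {k : Type} [Field k] {H : Type} [Ring H] [HopfAlgebra k H]
variable {M : Type} [AddCommGroup M] [Module k M]

lemma sum_counit_smul_left {p : H} {ι : Type*} (r : Coalgebra.Repr k p ι) :
    ∑ i ∈ r.index, Coalgebra.counit (R := k) (r.right i) • r.left i = p := by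
  have h := Coalgebra.sum_tmul_counit_eq (R := k) r
  apply_fun TensorProduct.rid k H at h
  simp only [map_sum, TensorProduct.rid_tmul, one_smul] at h
  exact h

lemma sum_repr_antipode (Rb : H →ₗ[k] H →ₗ[k] M) {p : H} {ι κ : Type*}
    (r : Coalgebra.Repr k p ι)
    (a₁ : (i : ι) → Coalgebra.Repr k (r.left i) κ) :
    ∑ i ∈ r.index, ∑ j ∈ (a₁ i).index,
      Rb ((a₁ i).left j) ((a₁ i).right j * antipode (R := k) (r.right i)) = Rb p 1 := by
  have h3 := Coalgebra.sum_tmul_tmul_eq r a₁ (fun i => ℛ k (r.right i))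
  apply_fun (TensorProduct.lift Rb ∘ₗ
      ((TensorProduct.lift ((LinearMap.mul k H).compl₂ (antipode (R := k)))).lTensor H)) at h3
  simp only [map_sum, LinearMap.coe_comp, Function.comp_apply, LinearMap.lTensor_tmul,
    TensorProduct.lift.tmul, LinearMap.compl₂_apply, LinearMap.mul_apply'] at h3
  rw [h3]
  have step : ∀ i ∈ r.index,
      ∑ j ∈ (ℛ k (r.right i)).index,
        Rb (r.left i) ((ℛ k (r.right i)).left j * antipode (R := k) ((ℛ k (r.right i)).right j))
      = Coalgebra.counit (R := k) (r.right i) • Rb (r.left i) 1 := by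
    intro i _
    rw [← map_sum, HopfAlgebra.sum_mul_antipode_eq_smul (ℛ k (r.right i)), map_smul]
  rw [Finset.sum_congr rfl step]
  conv_rhs => rw [← sum_counit_smul_left r]
  rw [map_sum, LinearMap.sum_apply]
  exact Finset.sum_congr rfl fun i _ => by rw [map_smul, LinearMap.smul_apply]
end Test2

section Test3
open Coalgebra HopfAlgebra
variable {k : Type} [Field k] {H : Type} [Ring H] [HopfAlgebra k H]
variable {A : Type} [NonUnitalRing A] [Module k A] [SMulCommClass k A A] [IsScalarTower k A A]

-- `Φ(a * h·b) = convL (Φ a) (gactC h (Φ b))`  (from act_assoc)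
lemma convL_phi_gact (act : H →ₗ[k] A →ₗ[k] A)
    (hpa : IsSymmPartialActionOn k H (LinearMap.mul k A) act) (a b : A) (h : H) :
    convL (act.flip a) (gactC h (act.flip b)) = act.flip (a * act h b) := by
  ext g
  have := hpa.act_assoc g h a b
  simp only [LinearMap.mul_apply'] at this
  rw [LinearMap.flip_apply, this, paRhs, sweedler_repr _ (ℛ k g), convL_repr _ _ (ℛ k g)]
  simp

lemma convL_gact_phi (act : H →ₗ[k] A →ₗ[k] A)
    (hpa : IsSymmPartialActionOn k H (LinearMap.mul k A) act) (a b : A) (h : H) :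
    convL (gactC h (act.flip b)) (act.flip a) = act.flip (act h b * a) := by
  ext g
  have := hpa.act_symm g h a b
  simp only [LinearMap.mul_apply'] at this
  rw [LinearMap.flip_apply, this, paSymmRhs, sweedler_repr _ (ℛ k g), convL_repr _ _ (ℛ k g)]
  simp

lemma gactC_one (f : H →ₗ[k] A) : gactC (1 : H) f = f := by
  ext g; show f (g * 1) = f g; rw [mul_one]

lemma gactC_gactC (h g : H) (f : H →ₗ[k] A) : gactC h (gactC g f) = gactC (h * g) f := by
  ext t; show f (t * h * g) = f (t * (h * g)); rw [mul_assoc]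

-- key lemma for multiplicative closure
lemma convL_gact_gact (p q : H) (x y : H →ₗ[k] A) :
    convL (gactC p x) (gactC q y) = ∑ i ∈ (ℛ k p).index,
      gactC ((ℛ k p).left i)
        (convL x (gactC (antipode (R := k) ((ℛ k p).right i) * q) y)) := by
  ext t
  set r := ℛ k p with hr
  set s := ℛ k t with hs
  rw [convL_repr _ _ s]
  simp only [LinearMap.sum_apply]
  have rhs_eq : ∀ i ∈ r.index,
      (gactC (r.left i) (convL x (gactC (antipode (R := k) (r.right i) * q) y))) t
      = ∑ j ∈ s.index, ∑ m ∈ (ℛ k (r.left i)).index,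
          x (s.left j * (ℛ k (r.left i)).left m) *
            y (s.right j * (ℛ k (r.left i)).right m *
              (antipode (R := k) (r.right i) * q)) := by
    intro i _
    show (convL x (gactC (antipode (R := k) (r.right i) * q) y)) (t * r.left i) = _
    rw [convL_repr _ _ (reprMul s (ℛ k (r.left i)))]
    simp only [reprMul_index, reprMul_left, reprMul_right, gactC_apply]
    exact Finset.sum_product _ _ _
  rw [Finset.sum_congr rfl rhs_eq, Finset.sum_comm]
  refine Finset.sum_congr rfl fun j _ => ?_
  set Rj : H →ₗ[k] H →ₗ[k] A :=
    ((LinearMap.mul k A).comp (x.comp (LinearMap.mulLeft k (s.left j)))).compl₂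
      (y.comp ((LinearMap.mulLeft k (s.right j)).comp (LinearMap.mulRight k q))) with hRj
  have key := sum_repr_antipode Rj r (fun i => ℛ k (r.left i))
  have lhs_eq : ∀ i ∈ r.index, ∑ m ∈ (ℛ k (r.left i)).index,
      x (s.left j * (ℛ k (r.left i)).left m) *
        y (s.right j * (ℛ k (r.left i)).right m * (antipode (R := k) (r.right i) * q))
      = ∑ m ∈ (ℛ k (r.left i)).index,
        Rj ((ℛ k (r.left i)).left m)
          ((ℛ k (r.left i)).right m * antipode (R := k) (r.right i)) := by
    intro i _
    refine Finset.sum_congr rfl fun m _ => ?_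
    simp only [hRj, LinearMap.compl₂_apply, LinearMap.comp_apply, LinearMap.mul_apply',
      LinearMap.mulLeft_apply, LinearMap.mulRight_apply]
    rw [mul_assoc (s.right j), mul_assoc ((ℛ k (r.left i)).right m)]
  rw [Finset.sum_congr rfl lhs_eq, key]
  simp only [hRj, LinearMap.compl₂_apply, LinearMap.comp_apply, LinearMap.mul_apply',
    LinearMap.mulLeft_apply, LinearMap.mulRight_apply, one_mul, gactC_apply]
end Test3


section Test4x
open Coalgebra HopfAlgebra
variable {k : Type} [Field k] {H : Type} [Ring H] [HopfAlgebra k H]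
variable {A : Type} [NonUnitalRing A] [Module k A] [SMulCommClass k A A] [IsScalarTower k A A]

lemma gactC_convL (h : H) (x y : H →ₗ[k] A) :
    gactC h (convL x y) =
      sweedler k H ((convL.comp ((gactC (A := A)).flip x)).compl₂ (gactC.flip y)) h := by
  ext g
  rw [sweedler_repr _ (ℛ k h)]
  simp only [LinearMap.sum_apply, LinearMap.compl₂_apply, LinearMap.comp_apply,
    LinearMap.flip_apply]
  have hterm : ∀ i ∈ (ℛ k h).index,
      (convL (gactC ((ℛ k h).left i) x) (gactC ((ℛ k h).right i) y)) g
      = ∑ j ∈ (ℛ k g).index,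
          x ((ℛ k g).left j * (ℛ k h).left i) * y ((ℛ k g).right j * (ℛ k h).right i) :=
    fun i _ => by rw [convL_repr _ _ (ℛ k g)]; simp
  rw [Finset.sum_congr rfl hterm]
  rw [gactC_apply, convL_repr _ _ (reprMul (ℛ k g) (ℛ k h))]
  simp only [reprMul_index, reprMul_left, reprMul_right]
  exact Finset.sum_product_right _ _ _
end Test4x

set_option maxHeartbeats 1000000 in
/-- Let `act` be a symmetrical partial action of `H` on `A`, and let
`φ : A → Hom(H,A)`, `φ(a)(h) = h · a`.  Then `B = H ▷ φ(A)` is an `H`-module subalgebra of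
the convolution algebra `Hom(H,A)`, `φ(A)` is an ideal of `B`, and `(B, φ)` is a minimal
globalization of the partial action. -/
theorem standard_globalization
    (act : H →ₗ[k] A →ₗ[k] A) (hpa : IsSymmPartialAction k H act) :
    -- `B = H ▷ φ(A)` is an `H`-submodule subalgebra of `Hom(H, A)`
    (∀ x ∈ Submodule.span k
        {y : H →ₗ[k] A | ∃ (h : H) (a : A), y = gactC h (act.flip a)},
      ∀ y' ∈ Submodule.span k
        {y : H →ₗ[k] A | ∃ (h : H) (a : A), y = gactC h (act.flip a)},
      convL x y' ∈ Submodule.span k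
        {y : H →ₗ[k] A | ∃ (h : H) (a : A), y = gactC h (act.flip a)}) ∧
    (∀ (g : H), ∀ x ∈ Submodule.span k
        {y : H →ₗ[k] A | ∃ (h : H) (a : A), y = gactC h (act.flip a)},
      gactC g x ∈ Submodule.span k
        {y : H →ₗ[k] A | ∃ (h : H) (a : A), y = gactC h (act.flip a)}) ∧
    -- `φ(A)` is an ideal of `B`
    (∀ (a : A), ∀ x ∈ Submodule.span k
        {y : H →ₗ[k] A | ∃ (h : H) (a : A), y = gactC h (act.flip a)},
      convL (act.flip a) x ∈ Set.range act.flip ∧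
      convL x (act.flip a) ∈ Set.range act.flip) ∧
    -- the `H`-action is a module-algebra action for the convolution product
    (∀ f : H →ₗ[k] A, gactC (1 : H) f = f) ∧
    (∀ (h g : H) (f : H →ₗ[k] A), gactC h (gactC g f) = gactC (h * g) f) ∧
    (∀ (h : H) (x y : H →ₗ[k] A),
      gactC h (convL x y) =
        sweedler k H ((convL.comp ((gactC (A := A)).flip x)).compl₂ (gactC.flip y)) h) ∧
    -- `φ` is an algebra monomorphism intertwining the actions as a globalization
    Function.Injective (act.flip : A →ₗ[k] (H →ₗ[k] A)) ∧
    (∀ a b : A, act.flip (a * b) = convL (act.flip a) (act.flip b)) ∧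
    (∀ (h : H) (a b : A),
      act.flip (act h a * b) = convL (gactC h (act.flip a)) (act.flip b)) ∧
    (∀ (h : H) (a b : A),
      act.flip (b * act h a) = convL (act.flip b) (gactC h (act.flip a))) ∧
    -- minimality
    (∀ (n : ℕ) (h : Fin n → H) (a : Fin n → A),
      (∀ g : H, ∑ i, act (g * h i) (a i) = 0) →
      ∑ i, gactC (h i) (act.flip (a i)) = 0) := by

  have hpa' : IsSymmPartialActionOn k H (LinearMap.mul k A) act := hpa
  set Sgen := {y : H →ₗ[k] A | ∃ (h : H) (a : A), y = gactC h (act.flip a)} with hSgen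
  refine ⟨?h1, ?h2, ?h3, fun f => gactC_one f, fun h g f => gactC_gactC h g f,
    fun h x y => gactC_convL h x y, ?h7, ?h8, ?h9, ?h10, ?h11⟩
  case h7 =>
    intro a b hab
    have := congrArg (fun f : H →ₗ[k] A => f 1) hab
    simpa [hpa'.one_act] using this
  case h8 =>
    intro a b
    have := convL_phi_gact act hpa' a b 1
    rw [gactC_one, hpa'.one_act] at this
    exact this.symm
  case h9 =>
    intro h a b
    exact (convL_gact_phi act hpa' b a h).symm
  case h10 =>
    intro h a b
    exact (convL_phi_gact act hpa' b a h).symm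
  case h11 =>
    intro n h a hg
    ext g
    simpa using hg g
  case h3 =>
    intro a x hx
    induction hx using Submodule.span_induction with
    | mem z hz =>
      obtain ⟨h, b, rfl⟩ := hz
      exact ⟨⟨a * act h b, (convL_phi_gact act hpa' a b h).symm⟩,
        ⟨act h b * a, (convL_gact_phi act hpa' a b h).symm⟩⟩
    | zero => exact ⟨⟨0, by simp⟩, ⟨0, by simp⟩⟩
    | add u v _ _ hu hv =>
      obtain ⟨⟨cu, hcu⟩, ⟨du, hdu⟩⟩ := hu
      obtain ⟨⟨cv, hcv⟩, ⟨dv, hdv⟩⟩ := hv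
      exact ⟨⟨cu + cv, by simp [hcu, hcv]⟩, ⟨du + dv, by simp [hdu, hdv]⟩⟩
    | smul c u _ hu =>
      obtain ⟨⟨cu, hcu⟩, ⟨du, hdu⟩⟩ := hu
      exact ⟨⟨c • cu, by simp [hcu]⟩, ⟨c • du, by simp [hdu]⟩⟩
  case h2 =>
    intro g x hx
    induction hx using Submodule.span_induction with
    | mem z hz =>
      obtain ⟨h, b, rfl⟩ := hz
      rw [gactC_gactC]
      exact Submodule.subset_span ⟨g * h, b, rfl⟩
    | zero => simpa using Submodule.zero_mem _
    | add u v _ _ hu hv => simpa [map_add] using Submodule.add_mem _ hu hv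
    | smul c u _ hu => simpa [map_smul] using Submodule.smul_mem _ c hu
  case h1 =>
    intro x hx y hy
    induction hx, hy using Submodule.span_induction₂ with
    | mem_mem u v hu hv =>
      obtain ⟨p, a, rfl⟩ := hu
      obtain ⟨q, b, rfl⟩ := hv
      rw [convL_gact_gact]
      refine Submodule.sum_mem _ fun i _ => ?_
      rw [convL_phi_gact act hpa']
      exact Submodule.subset_span ⟨(Coalgebra.Repr.arbitrary k p).left i, _, rfl⟩
    | zero_left v hv => simpa using Submodule.zero_mem _
    | zero_right u hu => simpa using Submodule.zero_mem _
    | add_left u v w _ _ _ h1 h2 => simpa [map_add] using Submodule.add_mem _ h1 h2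
    | add_right u v w _ _ _ h1 h2 => simpa [map_add] using Submodule.add_mem _ h1 h2
    | smul_left c u v _ _ h1 => simpa [map_smul] using Submodule.smul_mem _ c h1
    | smul_right c u v _ _ h1 => simpa [map_smul] using Submodule.smul_mem _ c h1


end Stmt12
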